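/- Let Λ be a full-rank lattice in ℝⁿ and let 0 < θ ≤ κ. Then the flatness factor is monotone: ε_Λ(κ) ≤ ε_Λ(θ). -/

import Mathlib

noncomputable section

/-- The lattice Gaussian sum `g_{z,θ}(L) = Σ_{λ∈L} (2πθ²)^{−n/2}·exp(−‖λ − z‖²/(2θ²))`. -/
def latticeGaussSum {n : ℕ} (L : Set (EuclideanSpace ℝ (Fin n))) (θ : ℝ)
    (z : EuclideanSpace ℝ (Fin n)) : ℝ :=
  ∑' l : L, (2 * Real.pi * θ ^ 2) ^ (-(n : ℝ) / 2) *
    Real.exp (-‖(l : EuclideanSpace ℝ (Fin n)) - z‖ ^ 2 / (2 * θ ^ 2))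

/-- The flatness factor `ε_Λ(θ) = sup_{x∈ℝⁿ} |covol(Λ)·g_{x,θ}(Λ) − 1|` of a full-rank
lattice `Λ`, where `covol(Λ)` is the volume of a fundamental domain of `Λ`. -/
def flatnessFactor {n : ℕ} (Λ : Submodule ℤ (EuclideanSpace ℝ (Fin n))) (θ : ℝ) : ℝ :=
  ⨆ x : EuclideanSpace ℝ (Fin n),
    |ZLattice.covolume Λ * latticeGaussSum (Λ : Set (EuclideanSpace ℝ (Fin n))) θ x - 1|

section StmtNineAux

open MeasureTheory Real Metric

variable {n : ℕ}

lemma quad_id (a b : ℝ) (ha : 0 < a) (hb : 0 < b) (u v y : EuclideanSpace ℝ (Fin n)) :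
    a * ‖u - y‖^2 + b * ‖y - v‖^2 =
      (a+b) * ‖y - ((a/(a+b)) • u + (b/(a+b)) • v)‖^2 + (a*b/(a+b)) * ‖u - v‖^2 := by
  have hp : a + b ≠ 0 := by positivity
  rw [norm_sub_sq_real, norm_sub_sq_real, norm_sub_sq_real, norm_sub_sq_real]
  rw [inner_add_right, real_inner_smul_right, real_inner_smul_right]
  rw [norm_add_sq_real, norm_smul, norm_smul, real_inner_smul_left, real_inner_smul_right]
  simp only [Real.norm_eq_abs, abs_of_pos (by positivity : (0:ℝ) < a/(a+b)),
    abs_of_pos (by positivity : (0:ℝ) < b/(a+b))]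
  rw [real_inner_comm u y]
  field_simp
  ring

lemma integrable_gauss {p : ℝ} (hp : 0 < p) (c : EuclideanSpace ℝ (Fin n)) :
    Integrable (fun y : EuclideanSpace ℝ (Fin n) => rexp (-p * ‖y - c‖^2)) := by
  have h := GaussianFourier.integrable_cexp_neg_mul_sq_norm_add
    (V := EuclideanSpace ℝ (Fin n)) (b := (p:ℂ)) (by simpa using hp) 0 0
  have h2 : Integrable (fun y : EuclideanSpace ℝ (Fin n) => rexp (-p * ‖y‖^2)) := by
    have := h.norm
    simpa [Complex.norm_exp, ← Complex.ofReal_pow] using this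
  exact h2.comp_sub_right c

lemma integral_gauss {p : ℝ} (hp : 0 < p) (c : EuclideanSpace ℝ (Fin n)) :
    ∫ y : EuclideanSpace ℝ (Fin n), rexp (-p * ‖y - c‖^2) = (π / p) ^ ((n:ℝ)/2) := by
  rw [integral_sub_right_eq_self (fun y : EuclideanSpace ℝ (Fin n) => rexp (-p * ‖y‖^2)) c,
    GaussianFourier.integral_rexp_neg_mul_sq_norm hp, finrank_euclideanSpace_fin]

lemma rpow_neg_mul_self {x : ℝ} (hx : 0 < x) (e : ℝ) : x^(-e) * x^e = 1 := by
  rw [← Real.rpow_add hx]; simp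

lemma packing (Λ : Submodule ℤ (EuclideanSpace ℝ (Fin n))) [DiscreteTopology Λ]
    {p : ℝ} (hp : 0 < p) :
    ∃ C : ℝ, ∀ (y : EuclideanSpace ℝ (Fin n))
      (F : Finset (Λ : Set (EuclideanSpace ℝ (Fin n)))),
      ∑ l ∈ F, rexp (-p * ‖(l : EuclideanSpace ℝ (Fin n)) - y‖^2) ≤ C := by
  obtain ⟨ε, hε, hball⟩ : ∃ ε > 0, ∀ v : EuclideanSpace ℝ (Fin n), v ∈ Λ → ‖v‖ < ε → v = 0 := by
    have ho : IsOpen ({0} : Set Λ) := isOpen_discrete _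
    rw [Metric.isOpen_iff] at ho
    obtain ⟨ε, hε, hb⟩ := ho 0 rfl
    refine ⟨ε, hε, fun v hv hlt => ?_⟩
    have hmem : (⟨v, hv⟩ : Λ) ∈ Metric.ball (0 : Λ) ε := by
      rw [Metric.mem_ball, Subtype.dist_eq]
      simpa [dist_eq_norm] using hlt
    have := hb hmem
    simpa [Subtype.ext_iff] using this
  set r : ℝ := ε / 3 with hr_def
  have hr : 0 < r := by positivity
  have hsep : ∀ l m : EuclideanSpace ℝ (Fin n), l ∈ Λ → m ∈ Λ → l ≠ m → ε ≤ dist l m := by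
    intro l m hl hm hlm
    by_contra hcon
    push_neg at hcon
    have : l - m = 0 := by
      apply hball _ (Λ.sub_mem hl hm)
      rw [dist_eq_norm] at hcon
      simpa using hcon
    exact hlm (sub_eq_zero.1 this)
  have hdisj : ∀ l m : (Λ : Set (EuclideanSpace ℝ (Fin n))), l ≠ m →
      Disjoint (closedBall (l : EuclideanSpace ℝ (Fin n)) r)
        (closedBall (m : EuclideanSpace ℝ (Fin n)) r) := by
    intro l m hlm
    refine closedBall_disjoint_closedBall ?_
    have := hsep l m (SetLike.mem_coe.1 l.2) (SetLike.mem_coe.1 m.2)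
      (fun h => hlm (Subtype.ext h))
    linarith
  set V0 : ℝ := (volume (closedBall (0 : EuclideanSpace ℝ (Fin n)) r)).toReal with hV0_def
  have hV0 : 0 < V0 :=
    ENNReal.toReal_pos (measure_closedBall_pos volume 0 hr).ne' measure_closedBall_lt_top.ne
  set D : ℝ := V0 * rexp (-(p * r^2)) with hD_def
  have hD : 0 < D := by positivity
  refine ⟨(π / (p/2)) ^ ((n:ℝ)/2) / D, fun y F => ?_⟩
  set g : EuclideanSpace ℝ (Fin n) → ℝ := fun w => rexp (-(p/2) * ‖w - y‖^2) with hg_def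
  have hgint : Integrable g := integrable_gauss (half_pos hp) y
  have key : ∀ l : (Λ : Set (EuclideanSpace ℝ (Fin n))),
      rexp (-p * ‖(l : EuclideanSpace ℝ (Fin n)) - y‖^2) * D ≤
      ∫ w in closedBall (l : EuclideanSpace ℝ (Fin n)) r, g w := by
    intro l
    have hconst : ∀ w ∈ closedBall (l : EuclideanSpace ℝ (Fin n)) r,
        rexp (-p * ‖(l : EuclideanSpace ℝ (Fin n)) - y‖^2) * rexp (-(p * r^2)) ≤ g w := by
      intro w hw
      rw [← Real.exp_add]
      apply Real.exp_le_exp.2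
      have hwl : ‖w - (l : EuclideanSpace ℝ (Fin n))‖ ≤ r := by
        rw [← dist_eq_norm]; exact mem_closedBall.1 hw
      have h1 : ‖w - y‖ ≤ ‖(l : EuclideanSpace ℝ (Fin n)) - y‖ + r := by
        calc ‖w - y‖ = ‖(w - (l : EuclideanSpace ℝ (Fin n)))
              + ((l : EuclideanSpace ℝ (Fin n)) - y)‖ := by rw [sub_add_sub_cancel]
          _ ≤ ‖w - (l : EuclideanSpace ℝ (Fin n))‖ + ‖(l : EuclideanSpace ℝ (Fin n)) - y‖ :=
              norm_add_le _ _
          _ ≤ ‖(l : EuclideanSpace ℝ (Fin n)) - y‖ + r := by linarith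
      have h2 : ‖w - y‖^2 ≤ 2 * ‖(l : EuclideanSpace ℝ (Fin n)) - y‖^2 + 2 * r^2 := by
        nlinarith [norm_nonneg (w - y), norm_nonneg ((l : EuclideanSpace ℝ (Fin n)) - y), hr.le,
          mul_self_le_mul_self (norm_nonneg (w - y)) h1,
          sq_nonneg (‖(l : EuclideanSpace ℝ (Fin n)) - y‖ - r)]
      nlinarith [hp.le]
    have hineq := setIntegral_ge_of_const_le_real measurableSet_closedBall
      measure_closedBall_lt_top.ne hconst hgint.integrableOn
    rw [Measure.addHaar_real_closedBall_center] at hineq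
    calc rexp (-p * ‖(l : EuclideanSpace ℝ (Fin n)) - y‖^2) * D
        = rexp (-p * ‖(l : EuclideanSpace ℝ (Fin n)) - y‖^2) * rexp (-(p * r^2)) *
            (volume (closedBall (0 : EuclideanSpace ℝ (Fin n)) r)).toReal := by
          rw [hD_def]; ring
      _ ≤ _ := hineq
  have hsum : ∑ l ∈ F, rexp (-p * ‖(l : EuclideanSpace ℝ (Fin n)) - y‖^2) * D ≤
      ∫ w in ⋃ l ∈ F, closedBall (l : EuclideanSpace ℝ (Fin n)) r, g w := by
    rw [integral_biUnion_finset F (fun l _ => measurableSet_closedBall)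
      (fun l _ m _ hlm => hdisj l m hlm) (fun l _ => hgint.integrableOn)]
    exact Finset.sum_le_sum fun l _ => key l
  have hle : ∫ w in ⋃ l ∈ F, closedBall (l : EuclideanSpace ℝ (Fin n)) r, g w ≤
      (π / (p/2)) ^ ((n:ℝ)/2) := by
    rw [← integral_gauss (half_pos hp) y]
    exact setIntegral_le_integral hgint (Filter.Eventually.of_forall fun w => (Real.exp_pos _).le)
  rw [← Finset.sum_mul] at hsum
  rw [le_div_iff₀ hD]
  exact hsum.trans hle

lemma gauss_summable (Λ : Submodule ℤ (EuclideanSpace ℝ (Fin n))) [DiscreteTopology Λ]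
    {p : ℝ} (hp : 0 < p) :
    ∃ C : ℝ, ∀ y : EuclideanSpace ℝ (Fin n),
      Summable (fun l : (Λ : Set (EuclideanSpace ℝ (Fin n))) =>
        rexp (-p * ‖(l : EuclideanSpace ℝ (Fin n)) - y‖^2)) ∧
      ∑' l : (Λ : Set (EuclideanSpace ℝ (Fin n))), rexp (-p * ‖(l : EuclideanSpace ℝ (Fin n)) - y‖^2) ≤ C := by
  obtain ⟨C, hC⟩ := packing Λ hp
  refine ⟨C, fun y => ?_⟩
  have hsummable := summable_of_sum_le (fun l => (Real.exp_pos _).le) (hC y)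
  exact ⟨hsummable, Summable.tsum_le_of_sum_le hsummable (hC y)⟩

lemma const_conv {θ s κ : ℝ} (hθ : 0 < θ) (hs : 0 < s) (hκ : 0 < κ) (h2 : θ^2 + s^2 = κ^2) :
    (2*π*θ^2)^(-(n:ℝ)/2) * (2*π*s^2)^(-(n:ℝ)/2) * (π / (1/(2*θ^2) + 1/(2*s^2)))^((n:ℝ)/2)
      = (2*π*κ^2)^(-(n:ℝ)/2) := by
  have hπ := Real.pi_pos
  have hA : (0:ℝ) < 2*π*θ^2 := by positivity
  have hB : (0:ℝ) < 2*π*s^2 := by positivity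
  have hC : (0:ℝ) < 2*π*κ^2 := by positivity
  have hq : π / (1/(2*θ^2) + 1/(2*s^2)) = (2*π*θ^2) * (2*π*s^2) / (2*π*κ^2) := by
    rw [← h2]
    field_simp
    ring
  rw [hq, Real.div_rpow (by positivity) hC.le, ← Real.mul_rpow hA.le hB.le]
  rw [neg_div, Real.rpow_neg (by positivity : (0:ℝ) ≤ 2*π*θ^2 * (2*π*s^2)),
    Real.rpow_neg hC.le]
  have h1 : ((2*π*θ^2) * (2*π*s^2) : ℝ) ^ ((n:ℝ)/2) ≠ 0 :=
    (Real.rpow_pos_of_pos (by positivity) _).ne'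
  have h3 : ((2*π*κ^2) : ℝ) ^ ((n:ℝ)/2) ≠ 0 := (Real.rpow_pos_of_pos hC _).ne'
  field_simp

lemma const_exp {θ s κ : ℝ} (hθ : 0 < θ) (hs : 0 < s) (h2 : θ^2 + s^2 = κ^2) :
    (1/(2*θ^2)) * (1/(2*s^2)) / (1/(2*θ^2) + 1/(2*s^2)) = 1/(2*κ^2) := by
  rw [← h2]
  field_simp
  ring

lemma const_norm' {s : ℝ} (hs : 0 < s) :
    (2*π*s^2)^(-(n:ℝ)/2) * (π / (1/(2*s^2)))^((n:ℝ)/2) = 1 := by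
  have hπ := Real.pi_pos
  have hq : π / (1/(2*s^2)) = 2*π*s^2 := by field_simp
  rw [hq, neg_div, Real.rpow_neg (by positivity : (0:ℝ) ≤ 2*π*s^2)]
  exact inv_mul_cancel₀ (Real.rpow_pos_of_pos (by positivity) _).ne'

lemma lgs_eq (Λ : Submodule ℤ (EuclideanSpace ℝ (Fin n))) (θ : ℝ)
    (z : EuclideanSpace ℝ (Fin n)) :
    latticeGaussSum (Λ : Set (EuclideanSpace ℝ (Fin n))) θ z
      = (2*π*θ^2)^(-(n:ℝ)/2) * ∑' l : (Λ : Set (EuclideanSpace ℝ (Fin n))),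
          rexp (-(1/(2*θ^2)) * ‖(l : EuclideanSpace ℝ (Fin n)) - z‖^2) := by
  unfold latticeGaussSum
  rw [← tsum_mul_left]
  exact tsum_congr fun l => by congr 2; ring

lemma lgs_bounds (Λ : Submodule ℤ (EuclideanSpace ℝ (Fin n))) [DiscreteTopology Λ]
    {θ : ℝ} (hθ : 0 < θ) :
    ∃ M : ℝ, ∀ z : EuclideanSpace ℝ (Fin n),
      0 ≤ latticeGaussSum (Λ : Set (EuclideanSpace ℝ (Fin n))) θ z ∧
      latticeGaussSum (Λ : Set (EuclideanSpace ℝ (Fin n))) θ z ≤ (2*π*θ^2)^(-(n:ℝ)/2) * M := by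
  obtain ⟨C, hC⟩ := gauss_summable Λ (show (0:ℝ) < 1/(2*θ^2) by positivity)
  have hcθ : (0:ℝ) < (2*π*θ^2)^(-(n:ℝ)/2) :=
    Real.rpow_pos_of_pos (by have := Real.pi_pos; positivity) _
  refine ⟨C, fun z => ?_⟩
  constructor
  · rw [lgs_eq]
    exact mul_nonneg hcθ.le (tsum_nonneg fun l => (Real.exp_pos _).le)
  · rw [lgs_eq]
    exact mul_le_mul_of_nonneg_left (hC z).2 hcθ.le

lemma bdd_aux (Λ : Submodule ℤ (EuclideanSpace ℝ (Fin n))) [DiscreteTopology Λ]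
    {θ : ℝ} (hθ : 0 < θ) :
    BddAbove (Set.range fun x : EuclideanSpace ℝ (Fin n) =>
      |ZLattice.covolume Λ * latticeGaussSum (Λ : Set (EuclideanSpace ℝ (Fin n))) θ x - 1|) := by
  obtain ⟨M, hM⟩ := lgs_bounds Λ hθ
  refine ⟨|ZLattice.covolume Λ| * ((2*π*θ^2)^(-(n:ℝ)/2) * M) + 1, ?_⟩
  rintro u ⟨x, rfl⟩
  set G : ℝ := latticeGaussSum (Λ : Set (EuclideanSpace ℝ (Fin n))) θ x with hG_def
  have h0 := (hM x).1
  have h1 := (hM x).2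
  rw [← hG_def] at h0 h1
  have htri : |ZLattice.covolume Λ * G - 1| ≤ |ZLattice.covolume Λ * G| + 1 := by
    have := abs_sub (ZLattice.covolume Λ * G) (1:ℝ)
    simpa using this
  refine htri.trans (add_le_add_left ?_ 1)
  rw [abs_mul]
  have habs : |G| ≤ (2*π*θ^2)^(-(n:ℝ)/2) * M := by rw [abs_of_nonneg h0]; exact h1
  exact mul_le_mul_of_nonneg_left habs (abs_nonneg _)

lemma exp_combine (A B u v : ℝ) : (A * rexp u) * (B * rexp v) = (A*B) * rexp (u + v) := by
  rw [Real.exp_add]; ring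

lemma mul_exp_mul_exp (A u v : ℝ) : (A * rexp u) * rexp v = A * rexp (u + v) := by
  rw [Real.exp_add]; ring

/-- The convolution kernel. -/
def Fker {n : ℕ} (Λ : Submodule ℤ (EuclideanSpace ℝ (Fin n))) (θ s : ℝ)
    (x : EuclideanSpace ℝ (Fin n)) (l : (Λ : Set (EuclideanSpace ℝ (Fin n))))
    (y : EuclideanSpace ℝ (Fin n)) : ℝ :=
  ((2*π*θ^2)^(-(n:ℝ)/2) * rexp (-(1/(2*θ^2)) * ‖(l : EuclideanSpace ℝ (Fin n)) - y‖^2))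
    * ((2*π*s^2)^(-(n:ℝ)/2) * rexp (-(1/(2*s^2)) * ‖y - x‖^2))

lemma Fker_nonneg {Λ : Submodule ℤ (EuclideanSpace ℝ (Fin n))} {θ s : ℝ}
    (x : EuclideanSpace ℝ (Fin n)) (l : (Λ : Set (EuclideanSpace ℝ (Fin n))))
    (y : EuclideanSpace ℝ (Fin n)) : 0 ≤ Fker Λ θ s x l y := by
  unfold Fker
  have := Real.pi_pos
  positivity

lemma Fker_eq {Λ : Submodule ℤ (EuclideanSpace ℝ (Fin n))} {θ s : ℝ} (hθ : 0 < θ) (hs : 0 < s)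
    (x : EuclideanSpace ℝ (Fin n)) (l : (Λ : Set (EuclideanSpace ℝ (Fin n))))
    (y : EuclideanSpace ℝ (Fin n)) :
    Fker Λ θ s x l y
      = ((2*π*θ^2)^(-(n:ℝ)/2) * (2*π*s^2)^(-(n:ℝ)/2)
          * rexp (-((1/(2*θ^2)) * (1/(2*s^2)) / (1/(2*θ^2) + 1/(2*s^2)))
              * ‖(l : EuclideanSpace ℝ (Fin n)) - x‖^2))
        * rexp (-(1/(2*θ^2) + 1/(2*s^2))
            * ‖y - ((1/(2*θ^2)/(1/(2*θ^2) + 1/(2*s^2))) • (l : EuclideanSpace ℝ (Fin n))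
              + (1/(2*s^2)/(1/(2*θ^2) + 1/(2*s^2))) • x)‖^2) := by
  have ha : (0:ℝ) < 1/(2*θ^2) := by positivity
  have hb : (0:ℝ) < 1/(2*s^2) := by positivity
  have hq := quad_id (1/(2*θ^2)) (1/(2*s^2)) ha hb
    (l : EuclideanSpace ℝ (Fin n)) x y
  unfold Fker
  rw [exp_combine, mul_exp_mul_exp]
  congr 2
  linear_combination -hq

lemma Fker_integrable {Λ : Submodule ℤ (EuclideanSpace ℝ (Fin n))} {θ s : ℝ}
    (hθ : 0 < θ) (hs : 0 < s) (x : EuclideanSpace ℝ (Fin n))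
    (l : (Λ : Set (EuclideanSpace ℝ (Fin n)))) :
    Integrable (Fker Λ θ s x l) := by
  have hp : (0:ℝ) < 1/(2*θ^2) + 1/(2*s^2) := by positivity
  have : Fker Λ θ s x l = fun y => ((2*π*θ^2)^(-(n:ℝ)/2) * (2*π*s^2)^(-(n:ℝ)/2)
          * rexp (-((1/(2*θ^2)) * (1/(2*s^2)) / (1/(2*θ^2) + 1/(2*s^2)))
              * ‖(l : EuclideanSpace ℝ (Fin n)) - x‖^2))
        * rexp (-(1/(2*θ^2) + 1/(2*s^2))
            * ‖y - ((1/(2*θ^2)/(1/(2*θ^2) + 1/(2*s^2))) • (l : EuclideanSpace ℝ (Fin n))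
              + (1/(2*s^2)/(1/(2*θ^2) + 1/(2*s^2))) • x)‖^2) :=
    funext fun y => Fker_eq hθ hs x l y
  rw [this]
  exact (integrable_gauss hp _).const_mul _

lemma Fker_integral {Λ : Submodule ℤ (EuclideanSpace ℝ (Fin n))} {θ s κ : ℝ}
    (hθ : 0 < θ) (hs : 0 < s) (hκ : 0 < κ) (h2 : θ^2 + s^2 = κ^2)
    (x : EuclideanSpace ℝ (Fin n)) (l : (Λ : Set (EuclideanSpace ℝ (Fin n)))) :
    ∫ y, Fker Λ θ s x l y
      = (2*π*κ^2)^(-(n:ℝ)/2) * rexp (-(1/(2*κ^2)) * ‖(l : EuclideanSpace ℝ (Fin n)) - x‖^2) := by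
  have hp : (0:ℝ) < 1/(2*θ^2) + 1/(2*s^2) := by positivity
  simp only [fun y => Fker_eq hθ hs x l y]
  rw [integral_const_mul, integral_gauss hp]
  rw [const_exp hθ hs h2]
  calc ((2*π*θ^2)^(-(n:ℝ)/2) * (2*π*s^2)^(-(n:ℝ)/2)
        * rexp (-(1/(2*κ^2)) * ‖(l : EuclideanSpace ℝ (Fin n)) - x‖^2))
        * (π / (1/(2*θ^2) + 1/(2*s^2))) ^ ((n:ℝ)/2)
      = ((2*π*θ^2)^(-(n:ℝ)/2) * (2*π*s^2)^(-(n:ℝ)/2)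
          * (π / (1/(2*θ^2) + 1/(2*s^2))) ^ ((n:ℝ)/2))
        * rexp (-(1/(2*κ^2)) * ‖(l : EuclideanSpace ℝ (Fin n)) - x‖^2) := by ring
    _ = (2*π*κ^2)^(-(n:ℝ)/2)
        * rexp (-(1/(2*κ^2)) * ‖(l : EuclideanSpace ℝ (Fin n)) - x‖^2) := by
        rw [const_conv hθ hs hκ h2]

lemma le_flatness (Λ : Submodule ℤ (EuclideanSpace ℝ (Fin n))) [DiscreteTopology Λ]
    {θ : ℝ} (hθ : 0 < θ) (y : EuclideanSpace ℝ (Fin n)) :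
    |ZLattice.covolume Λ * latticeGaussSum (Λ : Set (EuclideanSpace ℝ (Fin n))) θ y - 1|
      ≤ flatnessFactor Λ θ := by
  unfold flatnessFactor
  exact le_ciSup (bdd_aux Λ hθ) y

set_option maxHeartbeats 2000000 in
lemma aux_main (Λ : Submodule ℤ (EuclideanSpace ℝ (Fin n))) [DiscreteTopology Λ]
    [IsZLattice ℝ Λ] {θ s κ : ℝ} (hθ : 0 < θ) (hs : 0 < s) (hκ : 0 < κ)
    (h2 : θ^2 + s^2 = κ^2) (x : EuclideanSpace ℝ (Fin n)) :
    |ZLattice.covolume Λ * latticeGaussSum (Λ : Set (EuclideanSpace ℝ (Fin n))) κ x - 1|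
      ≤ flatnessFactor Λ θ := by
  have hπ := Real.pi_pos
  have ha : (0:ℝ) < 1/(2*θ^2) := by positivity
  have hb : (0:ℝ) < 1/(2*s^2) := by positivity
  have hak : (0:ℝ) < 1/(2*κ^2) := by positivity
  have hcθ : (0:ℝ) < (2*π*θ^2)^(-(n:ℝ)/2) := Real.rpow_pos_of_pos (by positivity) _
  obtain ⟨C, hC⟩ := gauss_summable Λ ha
  obtain ⟨C', hC'⟩ := gauss_summable Λ hak
  haveI hcnt : Countable (Λ : Set (EuclideanSpace ℝ (Fin n))) :=
    Countable.of_equiv Λ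
      (Equiv.subtypeEquivRight fun x => (SetLike.mem_coe (p := Λ) (x := x)).symm)
  -- summability of integrals of norms
  have hsum_int : Summable (fun l : (Λ : Set (EuclideanSpace ℝ (Fin n))) =>
      ∫ y, ‖Fker Λ θ s x l y‖) := by
    have heq : (fun l : (Λ : Set (EuclideanSpace ℝ (Fin n))) => ∫ y, ‖Fker Λ θ s x l y‖)
        = fun l : (Λ : Set (EuclideanSpace ℝ (Fin n))) => (2*π*κ^2)^(-(n:ℝ)/2)
            * rexp (-(1/(2*κ^2)) * ‖(l : EuclideanSpace ℝ (Fin n)) - x‖^2) := by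
      funext l
      rw [← Fker_integral hθ hs hκ h2 x l]
      exact integral_congr_ae (Filter.Eventually.of_forall fun y => by
        beta_reduce
        rw [Real.norm_eq_abs, abs_of_nonneg (Fker_nonneg x l y)])
    rw [heq]
    exact Summable.mul_left _ ((hC' x).1)
  have hswap := integral_tsum_of_summable_integral_norm
    (fun l => Fker_integrable hθ hs x l) hsum_int
  -- the summed function
  have hg_eq : ∀ y, (∑' l : (Λ : Set (EuclideanSpace ℝ (Fin n))), Fker Λ θ s x l y)
      = latticeGaussSum (Λ : Set (EuclideanSpace ℝ (Fin n))) θ y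
        * ((2*π*s^2)^(-(n:ℝ)/2) * rexp (-(1/(2*s^2)) * ‖y - x‖^2)) := by
    intro y
    unfold Fker
    rw [tsum_mul_right, tsum_mul_left, ← lgs_eq]
  have hg_nonneg : ∀ y, 0 ≤ ∑' l : (Λ : Set (EuclideanSpace ℝ (Fin n))), Fker Λ θ s x l y :=
    fun y => tsum_nonneg fun l => Fker_nonneg x l y
  have hfs_int : Integrable (fun y : EuclideanSpace ℝ (Fin n) =>
      (2*π*s^2)^(-(n:ℝ)/2) * rexp (-(1/(2*s^2)) * ‖y - x‖^2)) :=
    (integrable_gauss hb x).const_mul _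
  -- measurability of the tsum
  have hgmeas : AEStronglyMeasurable
      (fun y => ∑' l : (Λ : Set (EuclideanSpace ℝ (Fin n))), Fker Λ θ s x l y) volume := by
    have hFm : ∀ l : (Λ : Set (EuclideanSpace ℝ (Fin n))), Measurable (Fker Λ θ s x l) := by
      intro l
      unfold Fker
      fun_prop
    have heq : (fun y => ∑' l : (Λ : Set (EuclideanSpace ℝ (Fin n))), Fker Λ θ s x l y)
        = fun y => ((∑' l : (Λ : Set (EuclideanSpace ℝ (Fin n))),
            Real.toNNReal (Fker Λ θ s x l y) : NNReal) : ℝ) := by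
      funext y
      rw [NNReal.coe_tsum]
      exact tsum_congr fun l => (Real.coe_toNNReal _ (Fker_nonneg x l y)).symm
    rw [heq]
    exact (AEMeasurable.coe_nnreal_real
      (AEMeasurable.nnreal_tsum fun l => ((hFm l).real_toNNReal).aemeasurable)).aestronglyMeasurable
  -- integrability of the tsum
  have hgbdd : ∀ y, (∑' l : (Λ : Set (EuclideanSpace ℝ (Fin n))), Fker Λ θ s x l y)
      ≤ ((2*π*θ^2)^(-(n:ℝ)/2) * C)
        * ((2*π*s^2)^(-(n:ℝ)/2) * rexp (-(1/(2*s^2)) * ‖y - x‖^2)) := by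
    intro y
    rw [hg_eq y, lgs_eq]
    have hfs_pos : (0:ℝ) < (2*π*s^2)^(-(n:ℝ)/2) * rexp (-(1/(2*s^2)) * ‖y - x‖^2) := by
      have : (0:ℝ) < (2*π*s^2)^(-(n:ℝ)/2) := Real.rpow_pos_of_pos (by positivity) _
      positivity
    refine mul_le_mul_of_nonneg_right ?_ hfs_pos.le
    exact mul_le_mul_of_nonneg_left (hC y).2 hcθ.le
  have hgint : Integrable
      (fun y => ∑' l : (Λ : Set (EuclideanSpace ℝ (Fin n))), Fker Λ θ s x l y) := by
    refine Integrable.mono' (hfs_int.const_mul ((2*π*θ^2)^(-(n:ℝ)/2) * C)) hgmeas ?_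
    refine Filter.Eventually.of_forall fun y => ?_
    rw [Real.norm_eq_abs, abs_of_nonneg (hg_nonneg y)]
    exact hgbdd y
  -- normalization
  have hfs1 : (∫ y : EuclideanSpace ℝ (Fin n),
      (2*π*s^2)^(-(n:ℝ)/2) * rexp (-(1/(2*s^2)) * ‖y - x‖^2)) = 1 := by
    rw [integral_const_mul, integral_gauss hb x, const_norm' hs]
  -- main identity
  have hGκ : ZLattice.covolume Λ * latticeGaussSum (Λ : Set (EuclideanSpace ℝ (Fin n))) κ x - 1
      = ∫ y, (ZLattice.covolume Λ
          * latticeGaussSum (Λ : Set (EuclideanSpace ℝ (Fin n))) θ y - 1)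
          * ((2*π*s^2)^(-(n:ℝ)/2) * rexp (-(1/(2*s^2)) * ‖y - x‖^2)) := by
    have e1 : latticeGaussSum (Λ : Set (EuclideanSpace ℝ (Fin n))) κ x
        = ∫ y, ∑' l : (Λ : Set (EuclideanSpace ℝ (Fin n))), Fker Λ θ s x l y := by
      rw [← hswap]
      unfold latticeGaussSum
      exact tsum_congr fun l => by rw [Fker_integral hθ hs hκ h2 x l]; congr 2; ring
    calc ZLattice.covolume Λ * latticeGaussSum (Λ : Set (EuclideanSpace ℝ (Fin n))) κ x - 1
        = ZLattice.covolume Λ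
            * (∫ y, ∑' l : (Λ : Set (EuclideanSpace ℝ (Fin n))), Fker Λ θ s x l y)
          - ∫ y : EuclideanSpace ℝ (Fin n),
              (2*π*s^2)^(-(n:ℝ)/2) * rexp (-(1/(2*s^2)) * ‖y - x‖^2) := by
          rw [e1, hfs1]
      _ = ∫ y, (ZLattice.covolume Λ
            * (∑' l : (Λ : Set (EuclideanSpace ℝ (Fin n))), Fker Λ θ s x l y)
            - (2*π*s^2)^(-(n:ℝ)/2) * rexp (-(1/(2*s^2)) * ‖y - x‖^2)) := by
          rw [integral_sub (hgint.const_mul _) hfs_int, integral_const_mul, integral_const_mul]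
      _ = ∫ y, (ZLattice.covolume Λ
            * latticeGaussSum (Λ : Set (EuclideanSpace ℝ (Fin n))) θ y - 1)
            * ((2*π*s^2)^(-(n:ℝ)/2) * rexp (-(1/(2*s^2)) * ‖y - x‖^2)) :=
          integral_congr_ae (Filter.Eventually.of_forall fun y => by
            beta_reduce
            rw [hg_eq y]; ring)
  rw [hGκ]
  have habs : |∫ y, (ZLattice.covolume Λ
        * latticeGaussSum (Λ : Set (EuclideanSpace ℝ (Fin n))) θ y - 1)
        * ((2*π*s^2)^(-(n:ℝ)/2) * rexp (-(1/(2*s^2)) * ‖y - x‖^2))|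
      ≤ ∫ y, |(ZLattice.covolume Λ
          * latticeGaussSum (Λ : Set (EuclideanSpace ℝ (Fin n))) θ y - 1)
          * ((2*π*s^2)^(-(n:ℝ)/2) * rexp (-(1/(2*s^2)) * ‖y - x‖^2))| := by
    have := norm_integral_le_integral_norm (μ := volume)
      (f := fun y => (ZLattice.covolume Λ
          * latticeGaussSum (Λ : Set (EuclideanSpace ℝ (Fin n))) θ y - 1)
          * ((2*π*s^2)^(-(n:ℝ)/2) * rexp (-(1/(2*s^2)) * ‖y - x‖^2)))
    simp only [Real.norm_eq_abs] at this
    exact this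
  refine habs.trans ?_
  have hint1 : Integrable (fun y => (ZLattice.covolume Λ
      * latticeGaussSum (Λ : Set (EuclideanSpace ℝ (Fin n))) θ y - 1)
      * ((2*π*s^2)^(-(n:ℝ)/2) * rexp (-(1/(2*s^2)) * ‖y - x‖^2))) := by
    refine ((hgint.const_mul (ZLattice.covolume Λ)).sub hfs_int).congr
      (Filter.Eventually.of_forall fun y => ?_)
    simp only [Pi.sub_apply]
    rw [hg_eq y]; ring
  calc ∫ y, |(ZLattice.covolume Λ
        * latticeGaussSum (Λ : Set (EuclideanSpace ℝ (Fin n))) θ y - 1)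
        * ((2*π*s^2)^(-(n:ℝ)/2) * rexp (-(1/(2*s^2)) * ‖y - x‖^2))|
      ≤ ∫ y, flatnessFactor Λ θ
          * ((2*π*s^2)^(-(n:ℝ)/2) * rexp (-(1/(2*s^2)) * ‖y - x‖^2)) := by
        refine integral_mono hint1.abs (hfs_int.const_mul _) fun y => ?_
        have hfs_pos : (0:ℝ) < (2*π*s^2)^(-(n:ℝ)/2) * rexp (-(1/(2*s^2)) * ‖y - x‖^2) := by
          have : (0:ℝ) < (2*π*s^2)^(-(n:ℝ)/2) := Real.rpow_pos_of_pos (by positivity) _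
          positivity
        rw [abs_mul, abs_of_pos hfs_pos]
        refine mul_le_mul_of_nonneg_right ?_ hfs_pos.le
        exact le_flatness Λ hθ y
    _ = flatnessFactor Λ θ := by rw [integral_const_mul, hfs1, mul_one]

end StmtNineAux

open scoped Real in
/-- Let `Λ` be a full-rank lattice in `ℝⁿ` and let `0 < θ ≤ κ`. Then the
flatness factor is monotone: `ε_Λ(κ) ≤ ε_Λ(θ)`. -/
theorem stmt_9 {n : ℕ} (Λ : Submodule ℤ (EuclideanSpace ℝ (Fin n)))
    [DiscreteTopology Λ] [IsZLattice ℝ Λ] (θ κ : ℝ) (hθ : 0 < θ) (hθκ : θ ≤ κ) :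
    flatnessFactor Λ κ ≤ flatnessFactor Λ θ := by
  rcases eq_or_lt_of_le hθκ with rfl | hlt
  · exact le_rfl
  have hκ : 0 < κ := hθ.trans hlt
  have hsq : (0:ℝ) < κ^2 - θ^2 := by nlinarith
  have hs : 0 < Real.sqrt (κ^2 - θ^2) := Real.sqrt_pos.2 hsq
  have h2 : θ^2 + (Real.sqrt (κ^2 - θ^2))^2 = κ^2 := by
    rw [Real.sq_sqrt hsq.le]; ring
  have hx : ∀ x : EuclideanSpace ℝ (Fin n),
      |ZLattice.covolume Λ * latticeGaussSum (Λ : Set (EuclideanSpace ℝ (Fin n))) κ x - 1|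
        ≤ flatnessFactor Λ θ := fun x => aux_main Λ hθ hs hκ h2 x
  exact ciSup_le hx

end
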